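/- Let 𝒜 be a trim ℕ-automaton computing g : A* → ℕ that contains a heavy cycle on some state. Then g has exponential growth; in particular there exist words u, v, w with v nonempty such that g(u v^ℓ w) ≥ 2^ℓ for all ℓ ≥ 0. -/

import Mathlib

set_option autoImplicit false

/-! ### Asymptotic growth of functions `A* → ℕ` -/

/-- `g` has `k`-polynomial growth: `g(w) = O(|w|^k)` and there is an infinite set `L`
of words on which `g(w) = Ω(|w|^k)`. -/
def PolyGrowth {A : Type} (g : List A → ℕ) (k : ℕ) : Prop :=
  (∃ C : ℕ, ∀ w, g w ≤ C * w.length ^ k + C) ∧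
  (∃ L : Set (List A), L.Infinite ∧ ∃ c : ℕ, 0 < c ∧ ∀ w ∈ L, w.length ^ k ≤ c * g w)

/-- `g` has exponential growth: `g(w) = 2^{O(|w|)}` and there is an infinite set `L`
of words on which `g(w) = 2^{Ω(|w|)}`. -/
def ExpGrowth {A : Type} (g : List A → ℕ) : Prop :=
  (∃ C : ℕ, ∀ w, g w ≤ 2 ^ (C * w.length + C)) ∧
  (∃ L : Set (List A), L.Infinite ∧ ∃ c : ℕ, 0 < c ∧ ∀ w ∈ L, 2 ^ w.length ≤ (g w) ^ c)

/-! ### Substitutions -/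

/-- Extension of a substitution `s : X → (B ⊎ X)*` to a morphism on `(B ⊎ X)*`
fixing the letters of `B`; this also gives the composition of substitutions,
`(s₁ ∘ s₂) x = applySubst s₁ (s₂ x)`. -/
def applySubst {B X : Type} (s : X → List (B ⊕ X)) (l : List (B ⊕ X)) : List (B ⊕ X) :=
  l.flatMap (fun c => match c with | Sum.inl b => [Sum.inl b] | Sum.inr x => s x)

/-- Evaluation of a word over `B ⊎ X` under a valuation `v : X → B*` of the registers. -/
def evalSubst {B X : Type} (v : X → List B) (l : List (B ⊕ X)) : List B :=
  l.flatMap (fun c => match c with | Sum.inl b => [b] | Sum.inr x => v x)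

/-- Number of occurrences of register `x` in a word over `B ⊎ X`. -/
noncomputable def occCount {B X : Type} (x : X) (l : List (B ⊕ X)) : ℕ :=
  l.countP (fun c => @decide (c = Sum.inr x) (Classical.propDecidable _))

/-- Total number of occurrences of register `x` in the whole set of words `{s y | y ∈ X}`. -/
noncomputable def totalOcc {B X : Type} [Fintype X] (s : X → List (B ⊕ X)) (x : X) : ℕ :=
  ∑ y : X, occCount x (s y)

/-! ### Streaming string transducers -/

/-- A streaming string transducer (SST) with input alphabet `A` and output alphabet `B`:
finitely many states `Q` with initial state `q0`, finitely many registers `X` with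
initial contents `init`, a partial transition/update function (`trans`, returning the
successor state together with the register update substitution, with a common domain),
and a partial output function `out`. -/
structure SST (A B : Type) where
  Q : Type
  X : Type
  [finQ : Fintype Q]
  [finX : Fintype X]
  q0 : Q
  init : X → List B
  trans : Q → A → Option (Q × (X → List (B ⊕ X)))
  out : Q → Option (List (B ⊕ X))

attribute [instance] SST.finQ SST.finX

/-- Run of an SST from state `q` with current register valuation `v`. -/
def SST.runFrom {A B : Type} (T : SST A B) :
    T.Q → (T.X → List B) → List A → Option (T.Q × (T.X → List B))
  | q, v, [] => some (q, v)
  | q, v, a :: w =>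
    match T.trans q a with
    | none => none
    | some (q', s) => T.runFrom q' (fun x => evalSubst v (s x)) w

/-- The (partial) function computed by an SST. -/
def SST.eval {A B : Type} (T : SST A B) (w : List A) : Option (List B) :=
  (T.runFrom T.q0 T.init w).bind fun p => (T.out p.1).map fun o => evalSubst p.2 o

def SST.Computes {A B : Type} (T : SST A B) (f : List A → Option (List B)) : Prop :=
  ∀ w, T.eval w = f w

/-- An SST is copyless if every update substitution uses each register at most once
in total. -/
def SST.Copyless {A B : Type} (T : SST A B) : Prop :=
  ∀ q a p, T.trans q a = some p → ∀ x : T.X, totalOcc p.2 x ≤ 1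

/-- An SST is `k`-layered if its registers can be partitioned into layers
`X_0, …, X_k` such that every update of a register of layer `i` only uses registers
of layers `≤ i`, and each register of layer `i` is used at most once in total in the
updates of the registers of layer `i`. -/
def SST.IsLayered {A B : Type} (T : SST A B) (k : ℕ) : Prop :=
  ∃ layer : T.X → Fin (k + 1),
    ∀ q a p, T.trans q a = some p →
      (∀ x y, Sum.inr y ∈ p.2 x → layer y ≤ layer x) ∧
      (∀ y : T.X,
        (∑ x ∈ Finset.univ.filter (fun x => layer x = layer y), occCount y (p.2 x)) ≤ 1)

/-- The composed substitution `λ(q, w)` applied along the run reading `w` from state `q`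
(together with the state reached). -/
def SST.substFrom {A B : Type} (T : SST A B) :
    T.Q → List A → Option (T.Q × (T.X → List (B ⊕ T.X)))
  | q, [] => some (q, fun x => [Sum.inr x])
  | q, a :: w =>
    match T.trans q a with
    | none => none
    | some (q', s) => (T.substFrom q' w).map fun p => (p.1, fun x => applySubst s (p.2 x))

/-- An SST is `(k,B)`-bounded if its registers can be partitioned into layers
`X_0, …, X_k` such that every update of a register of layer `i` only uses registers of
layers `≤ i`, and for every state `q` and word `w`, each register of layer `i` occurs
at most `B` times in total in `{λ(q,w)(x) | x ∈ X_i}`. -/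
def SST.IsBounded {A B : Type} (T : SST A B) (k Bd : ℕ) : Prop :=
  ∃ layer : T.X → Fin (k + 1),
    (∀ q a p, T.trans q a = some p → ∀ x y, Sum.inr y ∈ p.2 x → layer y ≤ layer x) ∧
    (∀ q w p, T.substFrom q w = some p →
      ∀ y : T.X,
        (∑ x ∈ Finset.univ.filter (fun x => layer x = layer y), occCount y (p.2 x)) ≤ Bd)

/-! ### Simple SSTs -/

/-- A simple SST: total, a single state (hence no state component), and update
substitutions and output using no letters of `B`. -/
structure SimpleSST (A B : Type) where
  X : Type
  [finX : Fintype X]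
  [decX : DecidableEq X]
  init : X → List B
  upd : A → X → List X
  out : List X

attribute [instance] SimpleSST.finX SimpleSST.decX

/-- Register valuation of a simple SST after reading a word, starting from valuation `v`. -/
def SimpleSST.valFrom {A B : Type} (T : SimpleSST A B) :
    (T.X → List B) → List A → T.X → List B
  | v, [] => v
  | v, a :: w => T.valFrom (fun x => (T.upd a x).flatMap v) w

/-- Register valuation `𝒯^w` of a simple SST after reading `w`. -/
def SimpleSST.val {A B : Type} (T : SimpleSST A B) (w : List A) : T.X → List B :=
  T.valFrom T.init w

/-- The (total) function computed by a simple SST. -/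
def SimpleSST.eval {A B : Type} (T : SimpleSST A B) (w : List A) : List B :=
  (T.out).flatMap (T.val w)

/-! ### Two-way transducers -/

/-- A tape symbol: a letter of `A` or one of the two endmarkers `⊢`, `⊣`. -/
inductive TapeSym (A : Type) where
  | lend
  | rend
  | letter (a : A)

/-- The content of the tape `⊢w⊣` at position `m ∈ {0, …, |w|+1}`. -/
def tapeAt {A : Type} (w : List A) (m : ℕ) : TapeSym A :=
  if m = 0 then TapeSym.lend
  else
    match w[m - 1]? with
    | some a => TapeSym.letter a
    | none => TapeSym.rend

/-- Head moves. -/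
inductive Dir where
  | left
  | right

/-- A deterministic two-way transducer: finitely many states with an initial state and
a set of final states, and a partial transition/output function (common domain). -/
structure TwoWayT (A B : Type) where
  Q : Type
  [finQ : Fintype Q]
  q0 : Q
  final : Set Q
  trans : Q → TapeSym A → Option ((Q × Dir) × List B)

attribute [instance] TwoWayT.finQ

/-- `TwoWayT.Steps T w c v c'`: on input `⊢w⊣` the transducer can go from
configuration `c` to configuration `c'` producing output `v`. -/
inductive TwoWayT.Steps {A B : Type} (T : TwoWayT A B) (w : List A) :
    T.Q × ℕ → List B → T.Q × ℕ → Prop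
  | refl (c : T.Q × ℕ) : TwoWayT.Steps T w c [] c
  | stepL {q : T.Q} {m : ℕ} {q' : T.Q} {v u : List B} {cf : T.Q × ℕ} :
      T.trans q (tapeAt w m) = some ((q', Dir.left), v) → 1 ≤ m →
      TwoWayT.Steps T w (q', m - 1) u cf → TwoWayT.Steps T w (q, m) (v ++ u) cf
  | stepR {q : T.Q} {m : ℕ} {q' : T.Q} {v u : List B} {cf : T.Q × ℕ} :
      T.trans q (tapeAt w m) = some ((q', Dir.right), v) → m ≤ w.length →
      TwoWayT.Steps T w (q', m + 1) u cf → TwoWayT.Steps T w (q, m) (v ++ u) cf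

/-- The two-way transducer computes the partial function `f`: `f w = some v` iff there
is an accepting run on `⊢w⊣` (from `(q0, 0)` to `(q, |w|+1)` with `q` final)
producing `v`. -/
def TwoWayT.Computes {A B : Type} (T : TwoWayT A B) (f : List A → Option (List B)) : Prop :=
  ∀ w v, f w = some v ↔ ∃ q ∈ T.final, TwoWayT.Steps T w (T.q0, 0) v (q, w.length + 1)

/-! ### Marble transducers -/

/-- Actions of a marble transducer: move left, move right, lift the marble, or drop a
marble of color `c`. -/
inductive MAct (C : Type) where
  | left
  | right
  | lift
  | drop (c : C)

/-- A deterministic marble transducer: finitely many states with an initial state and a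
set of final states, finitely many marble colors `C`, and a partial transition/output
function (common domain) reading the current state, the tape symbol, and the color of
the marble at the current position (if any); on a position carrying a marble the head
may only move left or lift the marble. -/
structure MarbleT (A B : Type) where
  Q : Type
  C : Type
  [finQ : Fintype Q]
  [finC : Fintype C]
  q0 : Q
  final : Set Q
  trans : Q → TapeSym A → Option C → Option ((Q × MAct C) × List B)
  marble_left_or_lift : ∀ q s c p, trans q s (some c) = some p →
    p.1.2 = MAct.left ∨ p.1.2 = MAct.lift

attribute [instance] MarbleT.finQ MarbleT.finC

/-- The color of the marble at position `m`, for a stack `π` of dropped marbles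
(topmost first, positions strictly increasing from the top and all ≥ the head
position). -/
def marbleAt {C : Type} (m : ℕ) : List (C × ℕ) → Option C
  | [] => none
  | (c, p) :: _ => if p = m then some c else none

/-- `MarbleT.Steps T w c v c'`: on input `⊢w⊣` the marble transducer can go from
configuration `c` to configuration `c'` producing output `v`. A configuration is a
triple (state, head position, stack of dropped marbles). -/
inductive MarbleT.Steps {A B : Type} (T : MarbleT A B) (w : List A) :
    T.Q × ℕ × List (T.C × ℕ) → List B → T.Q × ℕ × List (T.C × ℕ) → Prop
  | refl (c : T.Q × ℕ × List (T.C × ℕ)) : MarbleT.Steps T w c [] c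
  | stepL {q : T.Q} {m : ℕ} {π : List (T.C × ℕ)} {q' : T.Q} {v u : List B}
      {cf : T.Q × ℕ × List (T.C × ℕ)} :
      T.trans q (tapeAt w m) (marbleAt m π) = some ((q', MAct.left), v) → 1 ≤ m →
      MarbleT.Steps T w (q', m - 1, π) u cf → MarbleT.Steps T w (q, m, π) (v ++ u) cf
  | stepR {q : T.Q} {m : ℕ} {π : List (T.C × ℕ)} {q' : T.Q} {v u : List B}
      {cf : T.Q × ℕ × List (T.C × ℕ)} :
      marbleAt m π = none →
      T.trans q (tapeAt w m) none = some ((q', MAct.right), v) → m ≤ w.length →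
      MarbleT.Steps T w (q', m + 1, π) u cf → MarbleT.Steps T w (q, m, π) (v ++ u) cf
  | stepLift {q : T.Q} {m : ℕ} {π : List (T.C × ℕ)} {q' : T.Q} {cc : T.C} {v u : List B}
      {cf : T.Q × ℕ × List (T.C × ℕ)} :
      T.trans q (tapeAt w m) (some cc) = some ((q', MAct.lift), v) →
      MarbleT.Steps T w (q', m, π) u cf →
      MarbleT.Steps T w (q, m, (cc, m) :: π) (v ++ u) cf
  | stepDrop {q : T.Q} {m : ℕ} {π : List (T.C × ℕ)} {q' : T.Q} {cc : T.C} {v u : List B}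
      {cf : T.Q × ℕ × List (T.C × ℕ)} :
      marbleAt m π = none →
      T.trans q (tapeAt w m) none = some ((q', MAct.drop cc), v) →
      MarbleT.Steps T w (q', m, (cc, m) :: π) u cf →
      MarbleT.Steps T w (q, m, π) (v ++ u) cf

/-- The marble transducer computes the partial function `f`: `f w = some v` iff there is
an accepting run on `⊢w⊣` (from `(q0, 0, ε)` to `(q, |w|+1, ε)` with `q` final)
producing `v`. -/
def MarbleT.Computes {A B : Type} (T : MarbleT A B) (f : List A → Option (List B)) : Prop :=
  ∀ w v, f w = some v ↔
    ∃ q ∈ T.final, MarbleT.Steps T w (T.q0, 0, []) v (q, w.length + 1, [])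

/-- A `k`-marble transducer: every configuration reachable from the initial
configuration carries at most `k` marbles. -/
def MarbleT.IsKMarble {A B : Type} (T : MarbleT A B) (k : ℕ) : Prop :=
  ∀ (w : List A) (u : List B) (cfg : T.Q × ℕ × List (T.C × ℕ)),
    MarbleT.Steps T w (T.q0, 0, []) u cfg → cfg.2.2.length ≤ k

/-- `f` is computable by a `k`-marble transducer. -/
def ComputableKMarble {A B : Type} (f : List A → List B) (k : ℕ) : Prop :=
  ∃ T : MarbleT A B, T.IsKMarble k ∧ T.Computes (fun w => some (f w))

/-! ### Matrices over ℕ and ℕ-automata -/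

/-- Product of two square matrices over `ℕ` (given as functions). -/
def matMul {Q : Type} [Fintype Q] (M N : Q → Q → ℕ) : Q → Q → ℕ :=
  fun i j => ∑ x : Q, M i x * N x j

/-- Identity matrix over `ℕ`. -/
def matId {Q : Type} [DecidableEq Q] : Q → Q → ℕ :=
  fun i j => if i = j then 1 else 0

/-- Row vector times matrix. -/
def vecMat {Q : Type} [Fintype Q] (v : Q → ℕ) (M : Q → Q → ℕ) : Q → ℕ :=
  fun j => ∑ x : Q, v x * M x j

/-- Matrix times column vector. -/
def matVec {Q : Type} [Fintype Q] (M : Q → Q → ℕ) (v : Q → ℕ) : Q → ℕ :=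
  fun i => ∑ x : Q, M i x * v x

/-- Dot product of two vectors over `ℕ`. -/
def dotProd {Q : Type} [Fintype Q] (v w : Q → ℕ) : ℕ :=
  ∑ x : Q, v x * w x

/-- An `ℕ`-automaton: a finite set of states `Q`, an initial row vector `α`, a weight
matrix `μ a` for every letter `a` (extended to words as a monoid morphism `μW`), and a
final column vector `β`. -/
structure NAut (A : Type) where
  Q : Type
  [finQ : Fintype Q]
  [decQ : DecidableEq Q]
  α : Q → ℕ
  μ : A → Q → Q → ℕ
  β : Q → ℕ

attribute [instance] NAut.finQ NAut.decQ

/-- The monoid morphism `A* → ℕ^{Q×Q}` extending `μ`. -/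
def NAut.μW {A : Type} (T : NAut A) : List A → T.Q → T.Q → ℕ
  | [] => matId
  | a :: w => matMul (T.μ a) (T.μW w)

/-- The total function `g : A* → ℕ` computed by the `ℕ`-automaton: `g w = α·μ(w)·β`. -/
def NAut.g {A : Type} (T : NAut A) (w : List A) : ℕ :=
  dotProd (vecMat T.α (T.μW w)) T.β

/-- Trimness: every state is accessible and co-accessible with nonzero weight. -/
def NAut.Trim {A : Type} (T : NAut A) : Prop :=
  ∀ q : T.Q, (∃ u, 1 ≤ vecMat T.α (T.μW u) q) ∧ (∃ v, 1 ≤ matVec (T.μW v) T.β q)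

/-- A heavy cycle on state `q`: a nonempty word `v` with `μ(v)(q,q) ≥ 2`. -/
def NAut.HeavyCycle {A : Type} (T : NAut A) (q : T.Q) (v : List A) : Prop :=
  v ≠ [] ∧ 2 ≤ T.μW v q q

/-- A barbell from `q` to `q' ≠ q`: a nonempty word `v` with `μ(v)(q,q) ≥ 1`,
`μ(v)(q,q') ≥ 1` and `μ(v)(q',q') ≥ 1`. -/
def NAut.Barbell {A : Type} (T : NAut A) (q q' : T.Q) (v : List A) : Prop :=
  q ≠ q' ∧ v ≠ [] ∧ 1 ≤ T.μW v q q ∧ 1 ≤ T.μW v q q' ∧ 1 ≤ T.μW v q' q'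

/-- Edge of the barbell graph `𝔊`. -/
def NAut.GEdge {A : Type} (T : NAut A) (q1 q2 : T.Q) : Prop :=
  ∃ q q' v, T.Barbell q q' v ∧ (∃ w, 1 ≤ T.μW w q1 q) ∧ (∃ w', 1 ≤ T.μW w' q' q2)

/-- `PathLen G q n`: there is a directed path of length `n` (counting edges) in the
graph `G` ending in `q`. -/
inductive PathLen {Q : Type} (G : Q → Q → Prop) : Q → ℕ → Prop
  | zero (q : Q) : PathLen G q 0
  | succ {p q : Q} {n : ℕ} : PathLen G p n → G p q → PathLen G q (n + 1)

/-- The height of `q` in the graph `G` is `n`: the maximal length of a directed path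
ending in `q` is `n`. -/
def HeightIs {Q : Type} (G : Q → Q → Prop) (q : Q) (n : ℕ) : Prop :=
  PathLen G q n ∧ ∀ m, PathLen G q m → m ≤ n

/-! ### Statement-specific predicates -/

/-- Case (1) of the trichotomy: `|f|` has exponential growth and `f` is not computable
with `k` marbles for any `k`. -/
def MarbleCase1 {A B : Type} (f : List A → List B) : Prop :=
  ExpGrowth (fun w => (f w).length) ∧ ∀ k : ℕ, ¬ ComputableKMarble f k

/-- Case (2) of the trichotomy: `|f|` has `(k+1)`-polynomial growth for some `k`, `f` is
computable with `k` marbles, and `k` is the least possible number of marbles. -/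
def MarbleCase2 {A B : Type} (f : List A → List B) : Prop :=
  ∃ k : ℕ, PolyGrowth (fun w => (f w).length) (k + 1) ∧ ComputableKMarble f k ∧
    ∀ j : ℕ, ComputableKMarble f j → k ≤ j

/-- Case (3) of the trichotomy: `|f|` has `0`-polynomial growth and `f` is computable
with `0` marbles. -/
def MarbleCase3 {A B : Type} (f : List A → List B) : Prop :=
  PolyGrowth (fun w => (f w).length) 0 ∧ ComputableKMarble f 0

/-- The second alternative of Lemma `lem:graph`: `g` has `k`-polynomial growth for some
`k ≥ 0` and the states admit a partition `S_0, …, S_k` satisfying (a), (b), (c). -/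
def NAutPolyCase {A : Type} (T : NAut A) : Prop :=
  ∃ k : ℕ, PolyGrowth T.g k ∧
    ∃ S : T.Q → Fin (k + 1),
      (∀ q q' : T.Q, (∃ w, 1 ≤ T.μW w q q') → S q ≤ S q') ∧
      (∃ Bd : ℕ, ∀ q q' : T.Q, S q = S q' → ∀ w, T.μW w q q' ≤ Bd) ∧
      (∀ q : T.Q, ∃ C : ℕ, ∀ w, vecMat T.α (T.μW w) q ≤ C * w.length ^ (S q : ℕ) + C)

-- AUX START
private lemma sumSingleLe {Q : Type} [Fintype Q] (f : Q → ℕ) (q : Q) : f q ≤ ∑ x, f x :=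
  Finset.single_le_sum (fun _ _ => Nat.zero_le _) (Finset.mem_univ q)

lemma muW_append {A : Type} (T : NAut A) (x y : List A) :
    T.μW (x ++ y) = matMul (T.μW x) (T.μW y) := by
  induction x with
  | nil =>
    funext i j
    simp [NAut.μW, matMul, matId, Finset.sum_ite_eq]
  | cons a x ih =>
    funext i j
    show matMul (T.μ a) (T.μW (x ++ y)) i j = _
    rw [ih]
    simp only [NAut.μW, matMul, Finset.sum_mul, Finset.mul_sum, mul_assoc]
    rw [Finset.sum_comm]

lemma vecMat_matMul {Q : Type} [Fintype Q] (v : Q → ℕ) (M N : Q → Q → ℕ) :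
    vecMat v (matMul M N) = vecMat (vecMat v M) N := by
  funext j
  simp only [vecMat, matMul, Finset.sum_mul, Finset.mul_sum, mul_assoc]
  rw [Finset.sum_comm]

lemma dotProd_vecMat {Q : Type} [Fintype Q] (v u : Q → ℕ) (M : Q → Q → ℕ) :
    dotProd (vecMat v M) u = dotProd v (matVec M u) := by
  simp only [dotProd, vecMat, matVec, Finset.sum_mul, Finset.mul_sum, mul_assoc]
  rw [Finset.sum_comm]

lemma heavyPow {A : Type} (T : NAut A) (q : T.Q) (v : List A) (h2 : 2 ≤ T.μW v q q) :
    ∀ ℓ : ℕ, 2 ^ ℓ ≤ T.μW (List.replicate ℓ v).flatten q q := by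
  intro ℓ
  induction ℓ with
  | zero => simp [NAut.μW, matId]
  | succ n ih =>
    have hrep : (List.replicate (n+1) v).flatten = v ++ (List.replicate n v).flatten := by
      simp [List.replicate_succ]
    rw [hrep, muW_append]
    calc 2 ^ (n + 1) = 2 * 2 ^ n := by ring
    _ ≤ T.μW v q q * T.μW (List.replicate n v).flatten q q := Nat.mul_le_mul h2 ih
    _ ≤ _ := sumSingleLe (fun x => T.μW v q x * T.μW (List.replicate n v).flatten x q) q

lemma sandwich {A : Type} (T : NAut A) (w1 w2 w3 : List A) (q : T.Q) :
    vecMat T.α (T.μW w1) q * T.μW w2 q q * matVec (T.μW w3) T.β q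
      ≤ T.g (w1 ++ w2 ++ w3) := by
  have : T.g (w1 ++ w2 ++ w3)
      = dotProd (vecMat (vecMat T.α (T.μW w1)) (T.μW w2)) (matVec (T.μW w3) T.β) := by
    rw [NAut.g, muW_append, muW_append, vecMat_matMul, vecMat_matMul, dotProd_vecMat]
  rw [this]
  set a := vecMat T.α (T.μW w1)
  set b := matVec (T.μW w3) T.β
  calc a q * T.μW w2 q q * b q
      ≤ vecMat a (T.μW w2) q * b q :=
        Nat.mul_le_mul_right _ (sumSingleLe (fun x => a x * T.μW w2 x q) q)
    _ ≤ dotProd (vecMat a (T.μW w2)) b :=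
        sumSingleLe (fun x => vecMat a (T.μW w2) x * b x) q

lemma g_upper {A : Type} [Fintype A] (T : NAut A) :
    ∃ C : ℕ, ∀ w, T.g w ≤ 2 ^ (C * w.length + C) := by
  classical
  set E := (∑ a : A, ∑ i, ∑ j, T.μ a i j) + (∑ i, T.α i) + (∑ i, T.β i)
      + Fintype.card T.Q + 2 with hE
  have hμ : ∀ a i j, T.μ a i j ≤ E := by
    intro a i j
    have h1 : T.μ a i j ≤ ∑ a : A, ∑ i, ∑ j, T.μ a i j :=
      le_trans (le_trans (sumSingleLe _ j) (sumSingleLe (fun i => ∑ j, T.μ a i j) i))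
        (sumSingleLe (fun a => ∑ i, ∑ j, T.μ a i j) a)
    omega
  have hα : ∀ i, T.α i ≤ E := by
    intro i; have := sumSingleLe T.α i; omega
  have hβ : ∀ i, T.β i ≤ E := by
    intro i; have := sumSingleLe T.β i; omega
  have hcard : Fintype.card T.Q ≤ E := by omega
  have hE2 : 2 ≤ E := by omega
  have hE1 : 1 ≤ E := by omega
  have entry : ∀ w (i j : T.Q), T.μW w i j ≤ E ^ (2 * w.length) := by
    intro w
    induction w with
    | nil => intro i j; simp only [NAut.μW, matId]; split <;> simp
    | cons a w ih =>
      intro i j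
      calc T.μW (a :: w) i j = ∑ x, T.μ a i x * T.μW w x j := rfl
      _ ≤ ∑ _x : T.Q, E * E ^ (2 * w.length) :=
          Finset.sum_le_sum (fun x _ => Nat.mul_le_mul (hμ a i x) (ih x j))
      _ = Fintype.card T.Q * (E * E ^ (2 * w.length)) := by
          rw [Finset.sum_const, Finset.card_univ, smul_eq_mul]
      _ ≤ E * (E * E ^ (2 * w.length)) := Nat.mul_le_mul_right _ hcard
      _ = E ^ (2 * (a :: w).length) := by
          rw [List.length_cons]; ring
  have gb : ∀ w, T.g w ≤ E ^ (2 * w.length + 4) := by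
    intro w
    calc T.g w = ∑ j, (∑ i, T.α i * T.μW w i j) * T.β j := rfl
    _ ≤ ∑ _j : T.Q, (∑ _i : T.Q, E * E ^ (2 * w.length)) * E := by
        refine Finset.sum_le_sum (fun j _ => Nat.mul_le_mul ?_ (hβ j))
        exact Finset.sum_le_sum (fun i _ => Nat.mul_le_mul (hα i) (entry w i j))
    _ = Fintype.card T.Q * ((Fintype.card T.Q * (E * E ^ (2 * w.length))) * E) := by
        simp [Finset.sum_const, Finset.card_univ, mul_comm, mul_assoc, mul_left_comm]
    _ ≤ E * ((E * (E * E ^ (2 * w.length))) * E) := by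
        refine Nat.mul_le_mul hcard (Nat.mul_le_mul (Nat.mul_le_mul hcard le_rfl) le_rfl)
    _ = E ^ (2 * w.length + 4) := by ring
  refine ⟨4 * E, fun w => ?_⟩
  have hE2p : E ≤ 2 ^ E := (Nat.lt_two_pow_self (n := E)).le
  calc T.g w ≤ E ^ (2 * w.length + 4) := gb w
  _ ≤ (2 ^ E) ^ (2 * w.length + 4) := Nat.pow_le_pow_left hE2p _
  _ = 2 ^ (E * (2 * w.length + 4)) := by rw [← pow_mul]
  _ ≤ 2 ^ (4 * E * w.length + 4 * E) := by
      apply Nat.pow_le_pow_right (by norm_num)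
      ring_nf; nlinarith

theorem stmt9 {A : Type} [Fintype A] (T : NAut A) (hT : T.Trim)
    (h : ∃ q v, T.HeavyCycle q v) :
    ExpGrowth T.g ∧ ∃ u v w', v ≠ [] ∧ ∀ ℓ : ℕ,
      2 ^ ℓ ≤ T.g (u ++ (List.replicate ℓ v).flatten ++ w') := by
  obtain ⟨q, v, hv, h2⟩ := h
  obtain ⟨⟨u, hu⟩, ⟨w', hw⟩⟩ := hT q
  have key : ∀ ℓ : ℕ, 2 ^ ℓ ≤ T.g (u ++ (List.replicate ℓ v).flatten ++ w') := by
    intro ℓ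
    calc 2 ^ ℓ = 1 * 2 ^ ℓ * 1 := by ring
    _ ≤ vecMat T.α (T.μW u) q * T.μW (List.replicate ℓ v).flatten q q
        * matVec (T.μW w') T.β q :=
        Nat.mul_le_mul (Nat.mul_le_mul hu (heavyPow T q v h2 ℓ)) hw
    _ ≤ _ := sandwich T u _ w' q
  have hvlen : 1 ≤ v.length := List.length_pos_iff.mpr hv
  have hlen : ∀ n : ℕ,
      (u ++ (List.replicate n v).flatten ++ w').length
        = u.length + n * v.length + w'.length := by
    intro n
    simp [List.length_flatten, List.map_replicate, List.sum_replicate, mul_comm, Nat.add_assoc]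
  refine ⟨⟨g_upper T, ?_⟩, u, v, w', hv, key⟩
  refine ⟨Set.range (fun n : ℕ => u ++ (List.replicate (n + 1) v).flatten ++ w'),
    Set.infinite_range_of_injective ?_, u.length + w'.length + v.length + 1,
    by positivity, ?_⟩
  · intro n m hnm
    have := congrArg List.length hnm
    rw [hlen, hlen] at this
    have : (n + 1) * v.length = (m + 1) * v.length := by omega
    have := Nat.eq_of_mul_eq_mul_right hvlen this
    omega
  · rintro w ⟨n, rfl⟩
    set c := u.length + w'.length + v.length + 1 with hc
    have h1 : (u ++ (List.replicate (n + 1) v).flatten ++ w').length ≤ (n + 1) * c := by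
      rw [hlen, hc]
      have : u.length + w'.length + 1 ≤ (n + 1) * (u.length + w'.length + 1) :=
        Nat.le_mul_of_pos_left _ (by omega)
      nlinarith
    calc 2 ^ (u ++ (List.replicate (n + 1) v).flatten ++ w').length
        ≤ 2 ^ ((n + 1) * c) := Nat.pow_le_pow_right (by norm_num) h1
      _ = (2 ^ (n + 1)) ^ c := by rw [← pow_mul]
      _ ≤ (T.g (u ++ (List.replicate (n + 1) v).flatten ++ w')) ^ c :=
          Nat.pow_le_pow_left (key (n + 1)) c
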